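/- arXiv:1502.06362 — 4 statements merged into one kernel-verified Lean document; each statement's English description precedes it below -/
import Mathlib

section
/- Let C ⊆ R^n be a nonempty convex compact set and B an n×n real matrix. Suppose vectors w_1,…,w_N, u_1,…,u_N ∈ C satisfy (1/N)∑_t w_tᵀBu_t ≥ max_{w∈C} (1/N)∑_t wᵀBu_t − γ and (1/N)∑_t w_tᵀBu_t ≤ min_{u∈C} (1/N)∑_t w̄ᵀBu + γ, where w̄ = (1/N)∑_t w_t. Then min_{u∈C} w̄ᵀBu ≥ max_{w∈C} min_{u∈C} wᵀBu − 2γ. -/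
open Matrix Finset

lemma stmt6_cont_left (n : ℕ) (B : Matrix (Fin n) (Fin n) ℝ) (v : Fin n → ℝ) :
    Continuous fun w' : Fin n → ℝ => w' ⬝ᵥ B.mulVec v := by
  simp only [dotProduct]
  exact continuous_finset_sum _ fun i _ => (continuous_apply i).mul continuous_const

lemma stmt6_cont_right (n : ℕ) (B : Matrix (Fin n) (Fin n) ℝ) (v : Fin n → ℝ) :
    Continuous fun u' : Fin n → ℝ => v ⬝ᵥ B.mulVec u' := by
  simp only [dotProduct, Matrix.mulVec, Finset.mul_sum]
  exact continuous_finset_sum _ fun i _ => continuous_finset_sum _ fun j _ =>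
    continuous_const.mul ((continuous_const.mul (continuous_apply j)))

/-- If the averaged play of both players has low regret, the averaged row strategy
is an approximate maxmin solution of the game on `C`. -/
theorem stmt6 (n N : ℕ) (hN : 0 < N) (C : Set (Fin n → ℝ)) (hne : C.Nonempty)
    (hconv : Convex ℝ C) (hcomp : IsCompact C)
    (B : Matrix (Fin n) (Fin n) ℝ) (w u : Fin N → (Fin n → ℝ))
    (hw : ∀ t, w t ∈ C) (hu : ∀ t, u t ∈ C) (γ : ℝ)
    (hminimax :
      sSup ((fun w' => sInf ((fun u' => w' ⬝ᵥ B.mulVec u') '' C)) '' C) =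
        sInf ((fun u' => sSup ((fun w' => w' ⬝ᵥ B.mulVec u') '' C)) '' C))
    (hrow : (N : ℝ)⁻¹ * ∑ t, w t ⬝ᵥ B.mulVec (u t) ≥
      sSup ((fun w' => (N : ℝ)⁻¹ * ∑ t, w' ⬝ᵥ B.mulVec (u t)) '' C) - γ)
    (hcol : (N : ℝ)⁻¹ * ∑ t, w t ⬝ᵥ B.mulVec (u t) ≤
      sInf ((fun u' => ((N : ℝ)⁻¹ • ∑ t, w t) ⬝ᵥ B.mulVec u') '' C) + γ) :
    sInf ((fun u' => ((N : ℝ)⁻¹ • ∑ t, w t) ⬝ᵥ B.mulVec u') '' C) ≥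
      sSup ((fun w' => sInf ((fun u' => w' ⬝ᵥ B.mulVec u') '' C)) '' C) - 2 * γ := by
  set ubar : Fin n → ℝ := (N : ℝ)⁻¹ • ∑ t, u t with hubar
  have hNne : (N : ℝ) ≠ 0 := Nat.cast_ne_zero.mpr hN.ne'
  have hubarC : ubar ∈ C := by
    have := hconv.sum_mem (t := Finset.univ) (w := fun _ : Fin N => (N : ℝ)⁻¹)
      (fun t _ => by positivity)
      (by simp [Finset.sum_const, hNne]) (fun t _ => hu t)
    simpa [hubar, Finset.smul_sum] using this
  -- linearity: averaged payoff equals payoff against ubar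
  have hlin : ∀ w' : Fin n → ℝ,
      (N : ℝ)⁻¹ * ∑ t, w' ⬝ᵥ B.mulVec (u t) = w' ⬝ᵥ B.mulVec ubar := by
    intro w'
    simp only [hubar, Matrix.mulVec_smul, dotProduct_smul, smul_eq_mul]
    congr 1
    rw [show B.mulVec (∑ t, u t) = ∑ t, B.mulVec (u t) from map_sum B.mulVecLin u univ]
    simp only [dotProduct, Finset.sum_apply, Finset.mul_sum]
    exact Finset.sum_comm
  have himg : (fun w' => (N : ℝ)⁻¹ * ∑ t, w' ⬝ᵥ B.mulVec (u t)) '' C =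
      (fun w' => w' ⬝ᵥ B.mulVec ubar) '' C := by
    apply Set.image_congr'
    exact hlin
  -- minmax ≤ sSup over w' of payoff against ubar
  obtain ⟨w0, hw0⟩ := hne
  have hbddA : ∀ v ∈ C, BddAbove ((fun w' => w' ⬝ᵥ B.mulVec v) '' C) := fun v _ =>
    hcomp.bddAbove_image (stmt6_cont_left n B v).continuousOn
  have hbddBelowOuter : BddBelow ((fun u' => sSup ((fun w' => w' ⬝ᵥ B.mulVec u') '' C)) '' C) := by
    obtain ⟨m, hm⟩ := hcomp.bddBelow_image (stmt6_cont_right n B w0).continuousOn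
    refine ⟨m, ?_⟩
    rintro x ⟨v, hv, rfl⟩
    have h1 : w0 ⬝ᵥ B.mulVec v ≤ sSup ((fun w' => w' ⬝ᵥ B.mulVec v) '' C) :=
      le_csSup (hbddA v hv) ⟨w0, hw0, rfl⟩
    exact le_trans (hm ⟨v, hv, rfl⟩) h1
  have hminmax_le : sInf ((fun u' => sSup ((fun w' => w' ⬝ᵥ B.mulVec u') '' C)) '' C) ≤
      sSup ((fun w' => w' ⬝ᵥ B.mulVec ubar) '' C) :=
    csInf_le hbddBelowOuter ⟨ubar, hubarC, rfl⟩
  have hrow' : (N : ℝ)⁻¹ * ∑ t, w t ⬝ᵥ B.mulVec (u t) ≥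
      sSup ((fun w' => w' ⬝ᵥ B.mulVec ubar) '' C) - γ := by
    rwa [himg] at hrow
  linarith [hminimax ▸ le_refl (sSup ((fun w' => sInf ((fun u' => w' ⬝ᵥ B.mulVec u') '' C)) '' C)),
    hminimax.le.trans hminmax_le]
end

section
/- (Projected gradient ascent with inexact projections.) Let C ⊆ R^n be convex with diameter at most 2, B an n×n matrix with ‖Bu‖ ≤ L for all u ∈ C, and η > 0. Suppose the iterates satisfy z_{t+1} = w_t + ηBu_t with u_t ∈ C, w_t ∈ C, and the approximate projection condition ‖w − w_{t+1}‖² ≤ ‖w − z_{t+1}‖² + α‖w_t − z_{t+1}‖ for all w ∈ C. Then for all w ∈ C and all N: (1/N)∑_{t=1}^N w_tᵀBu_t ≥ (1/N)∑_{t=1}^N wᵀBu_t − (2/(ηN) + ηL²/2 + αL/2). -/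
open Matrix Finset RealInnerProductSpace

lemma telesum (f : ℕ → ℝ) (N : ℕ) :
    ∑ t ∈ Icc 1 N, (f t - f (t + 1)) = f 1 - f (N + 1) := by
  induction N with
  | zero => simp
  | succ k ih =>
    rw [Finset.sum_Icc_succ_top (by omega), ih]
    ring

/-- Projected gradient ascent with inexact projections: regret bound. -/
theorem stmt8 (n N : ℕ) (hN : 0 < N) (C : Set (EuclideanSpace ℝ (Fin n)))
    (hconv : Convex ℝ C) (hdiam : ∀ x ∈ C, ∀ y ∈ C, ‖x - y‖ ≤ 2)
    (B : Matrix (Fin n) (Fin n) ℝ) (L η α : ℝ) (hη : 0 < η) (hα : 0 ≤ α)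
    (hL : ∀ u' ∈ C, ‖Matrix.toEuclideanLin B u'‖ ≤ L)
    (w u z : ℕ → EuclideanSpace ℝ (Fin n))
    (hwC : ∀ t, w t ∈ C) (huC : ∀ t, u t ∈ C)
    (hz : ∀ t, z (t + 1) = w t + η • Matrix.toEuclideanLin B (u t))
    (hproj : ∀ t, ∀ w' ∈ C,
      ‖w' - w (t + 1)‖ ^ 2 ≤ ‖w' - z (t + 1)‖ ^ 2 + α * ‖w t - z (t + 1)‖) :
    ∀ w' ∈ C,
      (N : ℝ)⁻¹ * ∑ t ∈ Icc 1 N, (inner ℝ (w t) (Matrix.toEuclideanLin B (u t)) : ℝ) ≥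
        (N : ℝ)⁻¹ * ∑ t ∈ Icc 1 N, (inner ℝ (w') (Matrix.toEuclideanLin B (u t)) : ℝ) -
          (2 / (η * N) + η * L ^ 2 / 2 + α * L / 2) := by
  intro w' hw'
  set Bv : ℕ → EuclideanSpace ℝ (Fin n) := fun t => Matrix.toEuclideanLin B (u t) with hBv
  have hLpos : 0 ≤ L := le_trans (norm_nonneg _) (hL (u 0) (huC 0))
  set f : ℕ → ℝ := fun t => ‖w' - w t‖ ^ 2 with hf
  have key : ∀ t, (inner ℝ w' (Bv t) : ℝ) - inner ℝ (w t) (Bv t) ≤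
      (f t - f (t + 1)) / (2 * η) + η * L ^ 2 / 2 + α * L / 2 := by
    intro t
    have hp := hproj t w' hw'
    have hBL : ‖Bv t‖ ≤ L := hL (u t) (huC t)
    have hexp : ‖w' - z (t + 1)‖ ^ 2 =
        ‖w' - w t‖ ^ 2 - 2 * η * (inner ℝ (w' - w t) (Bv t) : ℝ) + η ^ 2 * ‖Bv t‖ ^ 2 := by
      rw [hz t]
      have : w' - (w t + η • Bv t) = (w' - w t) - η • Bv t := by abel
      rw [this, norm_sub_sq_real, real_inner_smul_right, norm_smul]
      simp [abs_of_pos hη, mul_pow]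
      ring
    have hnz : ‖w t - z (t + 1)‖ = η * ‖Bv t‖ := by
      rw [hz t]
      have : w t - (w t + η • Bv t) = -(η • Bv t) := by abel
      rw [this, norm_neg, norm_smul, Real.norm_eq_abs, abs_of_pos hη]
    rw [hexp, hnz] at hp
    have hinner : (inner ℝ (w' - w t) (Bv t) : ℝ) = inner ℝ w' (Bv t) - inner ℝ (w t) (Bv t) :=
      inner_sub_left _ _ _
    have hf1 : f t = ‖w' - w t‖ ^ 2 := rfl
    have hf2 : f (t + 1) = ‖w' - w (t + 1)‖ ^ 2 := rfl
    have hBnn : 0 ≤ ‖Bv t‖ := norm_nonneg _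
    have h2η : (0:ℝ) < 2 * η := by linarith
    set A : ℝ := (inner ℝ w' (Bv t) : ℝ) - inner ℝ (w t) (Bv t) with hA
    have h : 2 * η * A ≤ (f t - f (t + 1)) + η ^ 2 * L ^ 2 + α * η * L := by
      rw [hinner] at hp
      have hb1 : η ^ 2 * ‖Bv t‖ ^ 2 ≤ η ^ 2 * L ^ 2 :=
        mul_le_mul_of_nonneg_left (pow_le_pow_left₀ hBnn hBL 2) (sq_nonneg η)
      have hb2 : α * (η * ‖Bv t‖) ≤ α * η * L := by
        have h := mul_le_mul_of_nonneg_left hBL (mul_nonneg hα hη.le)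
        linarith
      simp only [hf1, hf2, hA]
      nlinarith
    calc A = (2 * η * A) / (2 * η) := by field_simp
      _ ≤ ((f t - f (t + 1)) + η ^ 2 * L ^ 2 + α * η * L) / (2 * η) := by gcongr
      _ = (f t - f (t + 1)) / (2 * η) + η * L ^ 2 / 2 + α * L / 2 := by
          field_simp
  have hsum : ∑ t ∈ Icc 1 N, ((inner ℝ w' (Bv t) : ℝ) - inner ℝ (w t) (Bv t)) ≤
      2 / η + N * (η * L ^ 2 / 2 + α * L / 2) := by
    calc ∑ t ∈ Icc 1 N, ((inner ℝ w' (Bv t) : ℝ) - inner ℝ (w t) (Bv t))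
        ≤ ∑ t ∈ Icc 1 N, ((f t - f (t + 1)) / (2 * η) + (η * L ^ 2 / 2 + α * L / 2)) := by
          apply Finset.sum_le_sum
          intro t _
          have := key t
          linarith
      _ = (f 1 - f (N + 1)) / (2 * η) + N * (η * L ^ 2 / 2 + α * L / 2) := by
          rw [Finset.sum_add_distrib, ← Finset.sum_div, telesum f N, Finset.sum_const,
            Nat.card_Icc]
          simp
          ring
      _ ≤ 2 / η + N * (η * L ^ 2 / 2 + α * L / 2) := by
          have h1 : f 1 ≤ 4 := by
            have := hdiam w' hw' (w 1) (hwC 1)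
            have hn : 0 ≤ ‖w' - w 1‖ := norm_nonneg _
            simp only [hf]
            nlinarith
          have h2 : 0 ≤ f (N + 1) := by positivity
          have h3 : (f 1 - f (N + 1)) / (2 * η) ≤ 4 / (2 * η) := by
            gcongr
            linarith
          have h4 : 4 / (2 * η) = 2 / η := by
            rw [div_eq_div_iff (by linarith) hη.ne']
            ring
          linarith
  rw [ge_iff_le, sub_le_iff_le_add]
  rw [Finset.sum_sub_distrib] at hsum
  have hNpos : (0 : ℝ) < N := by exact_mod_cast hN
  have h := mul_le_mul_of_nonneg_left hsum (inv_nonneg.2 hNpos.le)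
  rw [mul_sub] at h
  have e1 : (N:ℝ)⁻¹ * (2 / η + N * (η * L ^ 2 / 2 + α * L / 2)) =
      2 / (η * N) + (η * L ^ 2 / 2 + α * L / 2) := by
    field_simp
  rw [e1] at h
  simp only [hBv] at h
  linarith
end

section
/- (Frank–Wolfe-style inner loop guarantee.) Let C ⊆ R^n be convex with ‖v‖ ≤ 1 for all v ∈ C, z ∈ R^n, F(s,v) = ‖s−z‖² − ‖s−v‖², and let v* ∈ C be the projection of z onto C. Suppose v_1 ∈ C and for t = 1,…,N: s_t ∈ argmin_{s∈C} s·(v_t − z) and v_{t+1} = (1−ν)v_t + ν s_t. Then (1/N)∑_{t=1}^N F(s_t, v_t) ≥ (1/N)∑_{t=1}^N F(s_t, v*) − (‖v* − v_1‖²/(νN) + 4ν). -/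
open Finset RealInnerProductSpace

/-- Frank–Wolfe-style inner loop guarantee. -/
theorem stmt12 (n N : ℕ) (hN : 0 < N) (C : Set (EuclideanSpace ℝ (Fin n)))
    (hconv : Convex ℝ C) (hball : ∀ v' ∈ C, ‖v'‖ ≤ 1)
    (z : EuclideanSpace ℝ (Fin n))
    (vstar : EuclideanSpace ℝ (Fin n)) (hvstarC : vstar ∈ C)
    (hproj : ∀ v' ∈ C, ‖vstar - z‖ ≤ ‖v' - z‖)
    (ν : ℝ) (hν : 0 < ν) (hν1 : ν ≤ 1)
    (s v : ℕ → EuclideanSpace ℝ (Fin n)) (hv1 : v 1 ∈ C)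
    (hsC : ∀ t, s t ∈ C)
    (hbest : ∀ t, ∀ s' ∈ C, (inner ℝ (s t) (v t - z) : ℝ) ≤ (inner ℝ s' (v t - z) : ℝ))
    (hupd : ∀ t, v (t + 1) = (1 - ν) • v t + ν • s t) :
    (N : ℝ)⁻¹ * ∑ t ∈ Icc 1 N, (‖s t - z‖ ^ 2 - ‖s t - v t‖ ^ 2) ≥
      (N : ℝ)⁻¹ * ∑ t ∈ Icc 1 N, (‖s t - z‖ ^ 2 - ‖s t - vstar‖ ^ 2) -
        (‖vstar - v 1‖ ^ 2 / (ν * N) + 4 * ν) := by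
  -- all iterates stay in C
  have hCv : ∀ t, 1 ≤ t → v t ∈ C := by
    intro t
    induction t with
    | zero => omega
    | succ k ih =>
      intro _
      rcases Nat.lt_or_ge k 1 with hk | hk
      · interval_cases k
        exact hv1
      · rw [hupd k]
        exact hconv (ih hk) (hsC k) (by linarith) hν.le (by ring)
  -- key per-step inequality
  have key : ∀ t, 1 ≤ t →
      ‖vstar - v (t+1)‖^2 ≤ ‖vstar - v t‖^2 +
        ν * ((‖s t - z‖^2 - ‖s t - v t‖^2) - (‖s t - z‖^2 - ‖s t - vstar‖^2)) + 4 * ν^2 := by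
    intro t ht
    have hst : ‖s t - v t‖ ≤ 2 := by
      calc ‖s t - v t‖ ≤ ‖s t‖ + ‖v t‖ := norm_sub_le _ _
        _ ≤ 2 := by
            have h1 := hball _ (hsC t); have h2 := hball _ (hCv t ht); linarith
    have h1 : vstar - v (t+1) = (vstar - v t) - ν • (s t - v t) := by
      rw [hupd t]; module
    have h2 : ‖vstar - v (t+1)‖^2 = ‖vstar - v t‖^2
        - 2 * (ν * ⟪vstar - v t, s t - v t⟫) + ν^2 * ‖s t - v t‖^2 := by
      rw [h1, norm_sub_sq_real, real_inner_smul_right, norm_smul, Real.norm_eq_abs,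
        abs_of_pos hν]
      ring
    have h3 : ‖s t - vstar‖^2 - ‖s t - v t‖^2
        = ‖vstar - v t‖^2 - 2 * ⟪vstar - v t, s t - v t⟫ := by
      have e1 : ‖s t - vstar‖^2 = ‖s t‖^2 - 2*⟪s t, vstar⟫ + ‖vstar‖^2 := norm_sub_sq_real _ _
      have e2 : ‖s t - v t‖^2 = ‖s t‖^2 - 2*⟪s t, v t⟫ + ‖v t‖^2 := norm_sub_sq_real _ _
      have e3 : ‖vstar - v t‖^2 = ‖vstar‖^2 - 2*⟪vstar, v t⟫ + ‖v t‖^2 := norm_sub_sq_real _ _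
      have e4 : ⟪vstar - v t, s t - v t⟫
          = ⟪vstar, s t⟫ - ⟪vstar, v t⟫ - ⟪v t, s t⟫ + ⟪v t, v t⟫ := by
        rw [inner_sub_left, inner_sub_right, inner_sub_right]; ring
      have e5 : ⟪v t, v t⟫ = ‖v t‖^2 := real_inner_self_eq_norm_sq _
      have e6 : ⟪vstar, s t⟫ = ⟪s t, vstar⟫ := real_inner_comm _ _
      have e7 : ⟪v t, s t⟫ = ⟪s t, v t⟫ := real_inner_comm _ _
      rw [e1, e2, e3, e4, e5, e6, e7]; ring
    have hν2 : ν^2 * ‖s t - v t‖^2 ≤ 4 * ν^2 := by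
      have hx2 : ‖s t - v t‖^2 ≤ 4 := by nlinarith [norm_nonneg (s t - v t)]
      nlinarith [sq_nonneg ν]
    nlinarith [sq_nonneg ‖vstar - v t‖]
  -- telescoping sum
  have tele : ∀ M : ℕ, ∑ t ∈ Icc 1 M, (‖vstar - v (t+1)‖^2 - ‖vstar - v t‖^2)
      = ‖vstar - v (M+1)‖^2 - ‖vstar - v 1‖^2 := by
    intro M
    induction M with
    | zero => simp
    | succ k ih =>
      rw [Finset.sum_Icc_succ_top (by omega : 1 ≤ k + 1), ih]
      ring
  have hsum : ∑ t ∈ Icc 1 N, (‖vstar - v (t+1)‖^2 - ‖vstar - v t‖^2) ≤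
      ∑ t ∈ Icc 1 N, (ν * ((‖s t - z‖^2 - ‖s t - v t‖^2)
        - (‖s t - z‖^2 - ‖s t - vstar‖^2)) + 4 * ν^2) := by
    apply Finset.sum_le_sum
    intro t htm
    have ht1 : 1 ≤ t := (Finset.mem_Icc.mp htm).1
    have := key t ht1
    linarith
  rw [tele] at hsum
  rw [Finset.sum_add_distrib, ← Finset.mul_sum, Finset.sum_const, Nat.card_Icc] at hsum
  simp only [Nat.add_sub_cancel, nsmul_eq_mul] at hsum
  set A := ∑ t ∈ Icc 1 N, (‖s t - z‖ ^ 2 - ‖s t - v t‖ ^ 2) with hA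
  set B := ∑ t ∈ Icc 1 N, (‖s t - z‖ ^ 2 - ‖s t - vstar‖ ^ 2) with hB
  have hdist : ∑ t ∈ Icc 1 N, ((‖s t - z‖^2 - ‖s t - v t‖^2)
      - (‖s t - z‖^2 - ‖s t - vstar‖^2)) = A - B := by
    rw [Finset.sum_sub_distrib]
  rw [hdist] at hsum
  -- hsum : ‖vstar - v (N+1)‖^2 - ‖vstar - v 1‖^2 ≤ ν * (A - B) + N • (4*ν^2)
  have hNpos : (0:ℝ) < N := by exact_mod_cast hN
  have hfin : ν * (B - A) ≤ ‖vstar - v 1‖^2 + 4 * ν^2 * N := by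
    have hnn : (0:ℝ) ≤ ‖vstar - v (N+1)‖^2 := sq_nonneg _
    have hsmul : (N : ℝ) • (4*ν^2) = 4 * ν^2 * N := by
      rw [smul_eq_mul]; ring
    nlinarith [hsum]
  rw [ge_iff_le]
  have hexp : ‖vstar - v 1‖^2 / (ν * N) + 4 * ν
      = (N:ℝ)⁻¹ * (‖vstar - v 1‖^2 / ν + 4 * ν * N) := by
    field_simp
  rw [hexp]
  have hBA : B - A ≤ ‖vstar - v 1‖^2 / ν + 4 * ν * N := by
    rw [div_add' _ _ _ (ne_of_gt hν)] at *
    rw [le_div_iff₀ hν]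
    nlinarith [hfin]
  have := mul_le_mul_of_nonneg_left hBA (inv_nonneg.mpr hNpos.le)
  linarith [this]
end

section
/- (Approximate projection output guarantee.) In the setting of the Frank–Wolfe-style inner loop, with v̄ = (1/N)∑_{t=1}^N v_t, one has min_{s∈C} F(s, v̄) ≥ −δ where δ = ‖v*−v_1‖²/(νN) + 4ν. Equivalently, for all s ∈ C: ‖s − v̄‖² ≤ ‖s − z‖² + δ. -/
open Finset RealInnerProductSpace

lemma stmt13_aux_id1 {E : Type*} [NormedAddCommGroup E] [InnerProductSpace ℝ E] (a b c : E) :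
    ‖a - b‖ ^ 2 - ‖a - c‖ ^ 2 = 2 * ⟪c - b, a - b⟫ - ‖c - b‖ ^ 2 := by
  simp only [@norm_sub_sq_real, inner_sub_left, inner_sub_right, real_inner_self_eq_norm_sq]
  ring_nf
  linarith [real_inner_comm b a, real_inner_comm c a, real_inner_comm c b]

lemma stmt13_aux_id2 {E : Type*} [NormedAddCommGroup E] [InnerProductSpace ℝ E] (a w z : E) :
    ‖a - z‖ ^ 2 - ‖a - w‖ ^ 2 = 2 * ⟪a, w - z⟫ + ‖z‖ ^ 2 - ‖w‖ ^ 2 := by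
  simp only [@norm_sub_sq_real, inner_sub_left, inner_sub_right, real_inner_self_eq_norm_sq]
  ring

/-- Approximate projection output guarantee: the averaged iterate `v̄` is a
`δ`-approximate projection of `z` onto `C`. -/
theorem stmt13 (n N : ℕ) (hN : 0 < N) (C : Set (EuclideanSpace ℝ (Fin n)))
    (hconv : Convex ℝ C) (hball : ∀ v' ∈ C, ‖v'‖ ≤ 1)
    (z : EuclideanSpace ℝ (Fin n))
    (vstar : EuclideanSpace ℝ (Fin n)) (hvstarC : vstar ∈ C)
    (hproj : ∀ v' ∈ C, ‖vstar - z‖ ≤ ‖v' - z‖)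
    (ν : ℝ) (hν : 0 < ν) (hν1 : ν ≤ 1)
    (s v : ℕ → EuclideanSpace ℝ (Fin n)) (hv1 : v 1 ∈ C)
    (hsC : ∀ t, s t ∈ C)
    (hbest : ∀ t, ∀ s' ∈ C, (inner ℝ (s t) (v t - z) : ℝ) ≤ (inner ℝ s' (v t - z) : ℝ))
    (hupd : ∀ t, v (t + 1) = (1 - ν) • v t + ν • s t) :
    ∀ s' ∈ C,
      ‖s' - (N : ℝ)⁻¹ • ∑ t ∈ Icc 1 N, v t‖ ^ 2 ≤
        ‖s' - z‖ ^ 2 + (‖vstar - v 1‖ ^ 2 / (ν * N) + 4 * ν) := by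
  intro s' hs'
  -- iterates stay in `C`
  have hvC : ∀ t, 1 ≤ t → v t ∈ C := by
    intro t ht
    induction t with
    | zero => omega
    | succ k ih =>
      rcases Nat.lt_or_ge 1 (k + 1) with h | h
      · have hk : 1 ≤ k := by omega
        rw [hupd k]
        exact hconv (ih hk) (hsC k) (by linarith) hν.le (by ring)
      · have : k = 0 := by omega
        simpa [this] using hv1
  haveI : Nonempty C := ⟨⟨vstar, hvstarC⟩⟩
  -- obtuse angle property of the projection
  have hobt : ∀ w ∈ C, ⟪z - vstar, w - vstar⟫ ≤ 0 := by
    have hbdd : BddBelow (Set.range fun w : C => ‖z - (w : EuclideanSpace ℝ (Fin n))‖) := by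
      refine ⟨0, ?_⟩
      rintro x ⟨w, rfl⟩
      positivity
    have h1 : (⨅ w : C, ‖z - (w : EuclideanSpace ℝ (Fin n))‖) ≤ ‖z - vstar‖ :=
      ciInf_le hbdd ⟨vstar, hvstarC⟩
    have h2 : ‖z - vstar‖ ≤ ⨅ w : C, ‖z - (w : EuclideanSpace ℝ (Fin n))‖ := by
      apply le_ciInf
      rintro ⟨w, hw⟩
      rw [norm_sub_rev z, norm_sub_rev z w]
      exact hproj w hw
    exact (norm_eq_iInf_iff_real_inner_le_zero hconv hvstarC).mp (le_antisymm h2 h1)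
  -- nonnegativity of F(w, vstar) for w ∈ C
  have hF0 : ∀ w ∈ C, ‖w - vstar‖ ^ 2 ≤ ‖w - z‖ ^ 2 := by
    intro w hw
    have h1 := stmt13_aux_id1 w vstar z
    nlinarith [hobt w hw, sq_nonneg ‖z - vstar‖]
  -- per-step descent inequality
  have key : ∀ t, 1 ≤ t → ν * (‖s t - v t‖ ^ 2 - ‖s t - vstar‖ ^ 2)
      ≤ ‖v t - vstar‖ ^ 2 - ‖v (t + 1) - vstar‖ ^ 2 + 4 * ν ^ 2 := by
    intro t ht
    have hvt : v t ∈ C := hvC t ht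
    have hnorm : ‖s t - v t‖ ≤ 2 := by
      calc ‖s t - v t‖ ≤ ‖s t‖ + ‖v t‖ := norm_sub_le _ _
        _ ≤ 2 := by linarith [hball _ (hsC t), hball _ hvt]
    have e1 : v (t + 1) - vstar = (v t - vstar) + ν • (s t - v t) := by
      rw [hupd t]; module
    have e2 : ‖v (t + 1) - vstar‖ ^ 2
        = ‖v t - vstar‖ ^ 2 + 2 * (ν * ⟪v t - vstar, s t - v t⟫) + ν ^ 2 * ‖s t - v t‖ ^ 2 := by
      rw [e1, @norm_add_sq_real, real_inner_smul_right, norm_smul]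
      rw [Real.norm_eq_abs, abs_of_pos hν, mul_pow]
    have e3 : ‖s t - v t‖ ^ 2 - ‖s t - vstar‖ ^ 2
        = 2 * ⟪vstar - v t, s t - v t⟫ - ‖vstar - v t‖ ^ 2 :=
      stmt13_aux_id1 (s t) (v t) vstar
    have e4 : ⟪vstar - v t, s t - v t⟫ = -⟪v t - vstar, s t - v t⟫ := by
      rw [← inner_neg_left]
      congr 1
      abel
    have h5 : (0:ℝ) ≤ 4 - ‖s t - v t‖ ^ 2 := by nlinarith [norm_nonneg (s t - v t)]
    rw [e3, e4]
    nlinarith [e2, mul_nonneg hν.le (sq_nonneg ‖vstar - v t‖),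
      mul_nonneg (sq_nonneg ν) h5]
  -- telescoping sum
  have hsum1 : ∑ t ∈ Icc 1 N, (‖v t - vstar‖ ^ 2 - ‖v (t + 1) - vstar‖ ^ 2)
      = ‖v 1 - vstar‖ ^ 2 - ‖v (N + 1) - vstar‖ ^ 2 := by
    rw [← Finset.Ico_add_one_right_eq_Icc, Finset.sum_Ico_eq_sum_range]
    have h := Finset.sum_range_sub' (fun i => ‖v (1 + i) - vstar‖ ^ 2) N
    simpa [Nat.add_comm] using h
  have hcard : (Icc 1 N).card = N := by rw [Nat.card_Icc]; omega
  have hsumkey : ν * ∑ t ∈ Icc 1 N, (‖s t - v t‖ ^ 2 - ‖s t - vstar‖ ^ 2)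
      ≤ ‖v 1 - vstar‖ ^ 2 + N * (4 * ν ^ 2) := by
    rw [Finset.mul_sum]
    calc ∑ t ∈ Icc 1 N, ν * (‖s t - v t‖ ^ 2 - ‖s t - vstar‖ ^ 2)
        ≤ ∑ t ∈ Icc 1 N, (‖v t - vstar‖ ^ 2 - ‖v (t + 1) - vstar‖ ^ 2 + 4 * ν ^ 2) :=
          Finset.sum_le_sum (fun t ht => key t (mem_Icc.mp ht).1)
      _ = (‖v 1 - vstar‖ ^ 2 - ‖v (N + 1) - vstar‖ ^ 2) + N * (4 * ν ^ 2) := by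
          rw [Finset.sum_add_distrib, hsum1, Finset.sum_const, hcard, nsmul_eq_mul]
      _ ≤ ‖v 1 - vstar‖ ^ 2 + N * (4 * ν ^ 2) := by
          nlinarith [sq_nonneg ‖v (N + 1) - vstar‖]
  -- compare with the best response s'
  have hbest' : ∀ t, ‖s t - z‖ ^ 2 - ‖s t - v t‖ ^ 2 ≤ ‖s' - z‖ ^ 2 - ‖s' - v t‖ ^ 2 := by
    intro t
    have h1 := stmt13_aux_id2 (s t) (v t) z
    have h2 := stmt13_aux_id2 s' (v t) z
    have h3 := hbest t s' hs'
    linarith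
  -- key summed bound on ∑ ‖s' - v t‖²
  have hmain : ∑ t ∈ Icc 1 N, ‖s' - v t‖ ^ 2
      ≤ N * ‖s' - z‖ ^ 2 + (‖v 1 - vstar‖ ^ 2 / ν + 4 * ν * N) := by
    have h1 : ∑ t ∈ Icc 1 N, (‖s t - v t‖ ^ 2 - ‖s t - vstar‖ ^ 2)
        ≤ ‖v 1 - vstar‖ ^ 2 / ν + 4 * ν * N := by
      rw [← mul_le_mul_iff_right₀ hν]
      calc ν * ∑ t ∈ Icc 1 N, (‖s t - v t‖ ^ 2 - ‖s t - vstar‖ ^ 2)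
          ≤ ‖v 1 - vstar‖ ^ 2 + N * (4 * ν ^ 2) := hsumkey
        _ = ν * (‖v 1 - vstar‖ ^ 2 / ν + 4 * ν * N) := by
            field_simp
    have h2 : ∑ t ∈ Icc 1 N, (‖s' - z‖ ^ 2 - ‖s' - v t‖ ^ 2)
        ≥ ∑ t ∈ Icc 1 N, (‖s t - v t‖ ^ 2 - ‖s t - vstar‖ ^ 2) * (-1) := by
      apply Finset.sum_le_sum
      intro t ht
      have := hbest' t
      have := hF0 (s t) (hsC t)
      linarith
    have h3 : ∑ t ∈ Icc 1 N, (‖s' - z‖ ^ 2 - ‖s' - v t‖ ^ 2)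
        = N * ‖s' - z‖ ^ 2 - ∑ t ∈ Icc 1 N, ‖s' - v t‖ ^ 2 := by
      rw [Finset.sum_sub_distrib, Finset.sum_const, hcard, nsmul_eq_mul]
    have h4 : ∑ t ∈ Icc 1 N, (‖s t - v t‖ ^ 2 - ‖s t - vstar‖ ^ 2) * (-1)
        = -∑ t ∈ Icc 1 N, (‖s t - v t‖ ^ 2 - ‖s t - vstar‖ ^ 2) := by
      rw [← Finset.sum_neg_distrib]
      congr 1
      ext t
      ring
    rw [h3] at h2
    rw [h4] at h2
    linarith
  -- Jensen step
  have hNpos : (0:ℝ) < N := by exact_mod_cast hN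
  have havg : (N : ℝ) • (s' - (N : ℝ)⁻¹ • ∑ t ∈ Icc 1 N, v t) = ∑ t ∈ Icc 1 N, (s' - v t) := by
    rw [Finset.sum_sub_distrib, Finset.sum_const, hcard, smul_sub, smul_inv_smul₀ (ne_of_gt hNpos)]
    congr 1
    rw [← Nat.cast_smul_eq_nsmul ℝ]
  have hJ : (N : ℝ) ^ 2 * ‖s' - (N : ℝ)⁻¹ • ∑ t ∈ Icc 1 N, v t‖ ^ 2
      ≤ (N : ℝ) * ∑ t ∈ Icc 1 N, ‖s' - v t‖ ^ 2 := by
    have h7 : ‖∑ t ∈ Icc 1 N, (s' - v t)‖ ≤ ∑ t ∈ Icc 1 N, ‖s' - v t‖ := norm_sum_le _ _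
    have h8 := sq_sum_le_card_mul_sum_sq (s := Icc 1 N) (f := fun t => ‖s' - v t‖)
    rw [hcard] at h8
    have h9 : ‖∑ t ∈ Icc 1 N, (s' - v t)‖ ^ 2
        = (N : ℝ) ^ 2 * ‖s' - (N : ℝ)⁻¹ • ∑ t ∈ Icc 1 N, v t‖ ^ 2 := by
      rw [← havg, norm_smul, Real.norm_eq_abs, abs_of_pos hNpos, mul_pow]
    have h10 : (0:ℝ) ≤ ∑ t ∈ Icc 1 N, ‖s' - v t‖ :=
      Finset.sum_nonneg (fun t _ => norm_nonneg _)
    nlinarith [norm_nonneg (∑ t ∈ Icc 1 N, (s' - v t))]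
  -- put everything together
  have hrev : ‖vstar - v 1‖ = ‖v 1 - vstar‖ := norm_sub_rev _ _
  rw [← mul_le_mul_iff_right₀ (show (0:ℝ) < (N:ℝ)^2 by positivity)]
  calc (N:ℝ)^2 * ‖s' - (N : ℝ)⁻¹ • ∑ t ∈ Icc 1 N, v t‖ ^ 2
      ≤ (N : ℝ) * ∑ t ∈ Icc 1 N, ‖s' - v t‖ ^ 2 := hJ
    _ ≤ (N : ℝ) * (N * ‖s' - z‖ ^ 2 + (‖v 1 - vstar‖ ^ 2 / ν + 4 * ν * N)) := by
        exact mul_le_mul_of_nonneg_left hmain hNpos.le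
    _ = (N:ℝ)^2 * (‖s' - z‖ ^ 2 + (‖vstar - v 1‖ ^ 2 / (ν * N) + 4 * ν)) := by
        rw [hrev]
        field_simp
end
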